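/- Suppose r ≥ 0, λ < inf r, both solutions below solve (1/2)σ²h'' + kh' - rh = -λh with value 1 at ξ, and every solution with initial derivative strictly above M_λ (resp. strictly below m_λ) fails to be positive, where M_λ := sup{h'(ξ) : h solves the ODE, h > 0, h(ξ) = 1} and m_λ is the corresponding infimum, both assumed finite. Then the solution h_M with h_M(ξ)=1, h_M'(ξ)=M_λ satisfies h_M' > 0 on (0,∞), and the solution h_m with h_m'(ξ)=m_λ satisfies h_m' < 0 on (0,∞). -/

import Mathlib

open Set MeasureTheory


lemma uIcc_sub_Ioi {ξ x : ℝ} (hξ : 0 < ξ) (hx : 0 < x) : uIcc ξ x ⊆ Ioi 0 :=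
  fun _ ht => lt_of_lt_of_le (lt_min hξ hx) ht.1

lemma ftc_Ioi {f : ℝ → ℝ} (hf : ContinuousOn f (Ioi 0)) {ξ x : ℝ} (hξ : 0 < ξ) (hx : 0 < x) :
    HasDerivAt (fun y => ∫ t in ξ..y, f t) (f x) x := by
  apply intervalIntegral.integral_hasDerivAt_right
  · exact (hf.mono (uIcc_sub_Ioi hξ hx)).intervalIntegrable
  · exact hf.stronglyMeasurableAtFilter isOpen_Ioi x hx
  · exact hf.continuousAt (Ioi_mem_nhds hx)

noncomputable def Pa (σ k : ℝ → ℝ) (ξ : ℝ) : ℝ → ℝ := fun x => ∫ t in ξ..x, 2 * k t / (σ t)^2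

noncomputable def Ia (σ k : ℝ → ℝ) (ξ : ℝ) (h : ℝ → ℝ) : ℝ → ℝ :=
  fun x => ∫ t in ξ..x, Real.exp (-(Pa σ k ξ t)) / (h t)^2

section

variable {σ k : ℝ → ℝ} {ξ : ℝ} {h : ℝ → ℝ}

lemma pa_cont (hσc : ContinuousOn σ (Ioi 0)) (hkc : ContinuousOn k (Ioi 0))
    (hσ : ∀ x ∈ Ioi (0:ℝ), 0 < σ x) :
    ContinuousOn (fun x => 2 * k x / (σ x)^2) (Ioi 0) :=
  (continuousOn_const.mul hkc).div (hσc.pow 2)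
    (fun x hx => pow_ne_zero _ (hσ x hx).ne')

lemma Pa_hasDeriv (hσc : ContinuousOn σ (Ioi 0)) (hkc : ContinuousOn k (Ioi 0))
    (hσ : ∀ x ∈ Ioi (0:ℝ), 0 < σ x) (hξ : 0 < ξ) {x : ℝ} (hx : x ∈ Ioi (0:ℝ)) :
    HasDerivAt (Pa σ k ξ) (2 * k x / (σ x)^2) x :=
  ftc_Ioi (pa_cont hσc hkc hσ) hξ hx

lemma Pa_cont (hσc : ContinuousOn σ (Ioi 0)) (hkc : ContinuousOn k (Ioi 0))
    (hσ : ∀ x ∈ Ioi (0:ℝ), 0 < σ x) (hξ : 0 < ξ) :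
    ContinuousOn (Pa σ k ξ) (Ioi 0) :=
  fun x hx => (Pa_hasDeriv hσc hkc hσ hξ hx).continuousAt.continuousWithinAt

lemma Pa_xi (σ k : ℝ → ℝ) (ξ : ℝ) : Pa σ k ξ ξ = 0 := intervalIntegral.integral_same

lemma Fa_cont (hσc : ContinuousOn σ (Ioi 0)) (hkc : ContinuousOn k (Ioi 0))
    (hσ : ∀ x ∈ Ioi (0:ℝ), 0 < σ x) (hξ : 0 < ξ)
    (hhc : ContinuousOn h (Ioi 0)) (hpos : ∀ x ∈ Ioi (0:ℝ), 0 < h x) :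
    ContinuousOn (fun x => Real.exp (-(Pa σ k ξ x)) / (h x)^2) (Ioi 0) :=
  (Real.continuous_exp.comp_continuousOn (Pa_cont hσc hkc hσ hξ).neg).div
    (hhc.pow 2) (fun x hx => pow_ne_zero _ (hpos x hx).ne')

lemma Ia_hasDeriv (hσc : ContinuousOn σ (Ioi 0)) (hkc : ContinuousOn k (Ioi 0))
    (hσ : ∀ x ∈ Ioi (0:ℝ), 0 < σ x) (hξ : 0 < ξ)
    (hhc : ContinuousOn h (Ioi 0)) (hpos : ∀ x ∈ Ioi (0:ℝ), 0 < h x)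
    {x : ℝ} (hx : x ∈ Ioi (0:ℝ)) :
    HasDerivAt (Ia σ k ξ h) (Real.exp (-(Pa σ k ξ x)) / (h x)^2) x :=
  ftc_Ioi (Fa_cont hσc hkc hσ hξ hhc hpos) hξ hx

lemma Ia_xi (σ k : ℝ → ℝ) (ξ : ℝ) (h : ℝ → ℝ) : Ia σ k ξ h ξ = 0 :=
  intervalIntegral.integral_same

end


lemma contDiffOn_of_hasDeriv {f f' : ℝ → ℝ} {n : ℕ}
    (hf : ∀ x ∈ Ioi (0:ℝ), HasDerivAt f (f' x) x) (hf' : ContDiffOn ℝ n f' (Ioi 0)) :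
    ContDiffOn ℝ (n+1) f (Ioi 0) := by
  rw [show ((n:WithTop ℕ∞) + 1 : WithTop ℕ∞) = (n:WithTop ℕ∞) + 1 by norm_num,
    contDiffOn_succ_iff_deriv_of_isOpen isOpen_Ioi]
  refine ⟨fun x hx => ((hf x hx).differentiableAt).differentiableWithinAt, ?_, ?_⟩
  · intro hω; exact absurd hω (by simp)
  · exact hf'.congr (fun x hx => ((hf x hx).deriv))

example {f f' : ℝ → ℝ} (hf : ∀ x ∈ Ioi (0:ℝ), HasDerivAt f (f' x) x)
    (hf' : ContDiffOn ℝ 1 f' (Ioi 0)) : ContDiffOn ℝ 2 f (Ioi 0) := by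
  have := contDiffOn_of_hasDeriv hf hf'
  norm_num at this
  exact this
lemma mem_construct (σ k r : ℝ → ℝ) (lam : ℝ) (ξ : ℝ) (hξ : 0 < ξ)
    (hσc : ContinuousOn σ (Ioi 0)) (hkc : ContinuousOn k (Ioi 0))
    (hσ : ∀ x ∈ Ioi (0:ℝ), 0 < σ x)
    (h : ℝ → ℝ) (hh : ContDiffOn ℝ 2 h (Ioi 0))
    (hode : ∀ x ∈ Ioi (0:ℝ),
      (1/2) * (σ x)^2 * deriv (deriv h) x + k x * deriv h x - r x * h x = -lam * h x)
    (hpos : ∀ x ∈ Ioi (0:ℝ), 0 < h x) (h1 : h ξ = 1)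
    (D : ℝ) (hD : ∀ x ∈ Ioi (0:ℝ), 0 < 1 + D * Ia σ k ξ h x) :
    ∃ g : ℝ → ℝ, ContDiffOn ℝ 2 g (Ioi 0) ∧
      (∀ x ∈ Ioi (0:ℝ),
        (1/2) * (σ x)^2 * deriv (deriv g) x + k x * deriv g x - r x * g x = -lam * g x) ∧
      (∀ x ∈ Ioi (0:ℝ), 0 < g x) ∧ g ξ = 1 ∧ deriv g ξ = deriv h ξ + D := by
  have hξ' : ξ ∈ Ioi (0:ℝ) := hξ
  have hne : ∀ x ∈ Ioi (0:ℝ), h x ≠ 0 := fun x hx => (hpos x hx).ne'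
  have hσne : ∀ x ∈ Ioi (0:ℝ), σ x ≠ 0 := fun x hx => (hσ x hx).ne'
  have hhc : ContinuousOn h (Ioi 0) := hh.continuousOn
  have hdh1 : ContDiffOn ℝ 1 (deriv h) (Ioi 0) := hh.deriv_of_isOpen isOpen_Ioi (by norm_num)
  have hDh : ∀ x ∈ Ioi (0:ℝ), HasDerivAt h (deriv h x) x := fun x hx =>
    ((hh.differentiableOn (by norm_num) x hx).differentiableAt
      (isOpen_Ioi.mem_nhds hx)).hasDerivAt
  have hDdh : ∀ x ∈ Ioi (0:ℝ), HasDerivAt (deriv h) (deriv (deriv h) x) x := fun x hx =>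
    ((hdh1.differentiableOn (by norm_num) x hx).differentiableAt
      (isOpen_Ioi.mem_nhds hx)).hasDerivAt
  have hP : ∀ x ∈ Ioi (0:ℝ), HasDerivAt (Pa σ k ξ) (2 * k x / (σ x)^2) x := fun x hx =>
    Pa_hasDeriv hσc hkc hσ hξ hx
  have hI : ∀ x ∈ Ioi (0:ℝ), HasDerivAt (Ia σ k ξ h) (Real.exp (-(Pa σ k ξ x)) / (h x)^2) x :=
    fun x hx => Ia_hasDeriv hσc hkc hσ hξ hhc hpos hx
  -- smoothness of Ia
  have hP1 : ContDiffOn ℝ 1 (Pa σ k ξ) (Ioi 0) := by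
    have := contDiffOn_of_hasDeriv hP ((contDiffOn_zero).2 (pa_cont hσc hkc hσ))
    norm_num at this; exact this
  have hF1 : ContDiffOn ℝ 1 (fun x => Real.exp (-(Pa σ k ξ x)) / (h x)^2) (Ioi 0) := by
    exact (hP1.neg.exp).div ((hh.of_le (by norm_num)).pow 2)
      (fun x hx => pow_ne_zero _ (hne x hx))
  have hI2 : ContDiffOn ℝ 2 (Ia σ k ξ h) (Ioi 0) := by
    have := contDiffOn_of_hasDeriv hI hF1
    norm_num at this; exact this
  set g : ℝ → ℝ := fun y => h y * (1 + D * Ia σ k ξ h y) with hgdef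
  set g1 : ℝ → ℝ := fun y =>
    deriv h y * (1 + D * Ia σ k ξ h y) + D * Real.exp (-(Pa σ k ξ y)) / h y with hg1def
  set g2 : ℝ → ℝ := fun y =>
    deriv (deriv h) y * (1 + D * Ia σ k ξ h y)
      - D * (2 * k y / (σ y)^2) * Real.exp (-(Pa σ k ξ y)) / h y with hg2def
  have hg : ∀ x ∈ Ioi (0:ℝ), HasDerivAt g (g1 x) x := by
    intro x hx
    have t := (hDh x hx).mul (((hI x hx).const_mul D).const_add 1)
    convert t using 1
    · rfl
    · rfl
    · rfl
    rw [hg1def]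
    field_simp [hne x hx]
  have hgd : ∀ x ∈ Ioi (0:ℝ), deriv g x = g1 x := fun x hx => (hg x hx).deriv
  have hg2 : ∀ x ∈ Ioi (0:ℝ), HasDerivAt g1 (g2 x) x := by
    intro x hx
    have t1 := (hDdh x hx).mul (((hI x hx).const_mul D).const_add 1)
    have t2 := (((hP x hx).neg.exp).const_mul D).div (hDh x hx) (hne x hx)
    have t := t1.add t2
    convert t using 1
    · rfl
    · rfl
    · rfl
    rw [hg2def]
    simp only [Pi.neg_apply]
    field_simp [hne x hx, hσne x hx]
    ring
  have hdd : ∀ x ∈ Ioi (0:ℝ), deriv (deriv g) x = g2 x := by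
    intro x hx
    have he : deriv g =ᶠ[nhds x] g1 :=
      Filter.eventuallyEq_of_mem (isOpen_Ioi.mem_nhds hx) hgd
    rw [he.deriv_eq, (hg2 x hx).deriv]
  refine ⟨g, ?_, ?_, ?_, ?_, ?_⟩
  · exact hh.mul (contDiffOn_const.add (contDiffOn_const.mul hI2))
  · intro x hx
    have e := hode x hx
    have hss : (1/2) * (σ x)^2 * (2 * k x / (σ x)^2) = k x := by
      field_simp [hσne x hx]
    rw [hdd x hx, hgd x hx, hg2def, hg1def, hgdef]
    simp only []
    linear_combination (1 + D * Ia σ k ξ h x) * e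
      - D * Real.exp (-(Pa σ k ξ x)) / h x * hss
  · exact fun x hx => mul_pos (hpos x hx) (hD x hx)
  · simp [hgdef, h1, Ia_xi]
  · rw [hgd ξ hξ', hg1def]
    simp [Ia_xi, Pa_xi, h1]
lemma exists_D (σ k r : ℝ → ℝ) (lam : ℝ) (ξ : ℝ) (hξ : 0 < ξ)
    (hσc : ContinuousOn σ (Ioi 0)) (hkc : ContinuousOn k (Ioi 0))
    (hσ : ∀ x ∈ Ioi (0:ℝ), 0 < σ x)
    (hq : ∀ x ∈ Ioi (0:ℝ), 0 < r x - lam)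
    (h : ℝ → ℝ) (hh : ContDiffOn ℝ 2 h (Ioi 0))
    (hode : ∀ x ∈ Ioi (0:ℝ),
      (1/2) * (σ x)^2 * deriv (deriv h) x + k x * deriv h x - r x * h x = -lam * h x)
    (hpos : ∀ x ∈ Ioi (0:ℝ), 0 < h x)
    (x₀ : ℝ) (hx₀ : x₀ ∈ Ioi (0:ℝ)) :
    (deriv h x₀ ≤ 0 → ∃ D > (0:ℝ), ∀ x ∈ Ioi (0:ℝ), 0 < 1 + D * Ia σ k ξ h x) ∧
    (0 ≤ deriv h x₀ → ∃ D < (0:ℝ), ∀ x ∈ Ioi (0:ℝ), 0 < 1 + D * Ia σ k ξ h x) := by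
  have hξ' : ξ ∈ Ioi (0:ℝ) := hξ
  have hne : ∀ x ∈ Ioi (0:ℝ), h x ≠ 0 := fun x hx => (hpos x hx).ne'
  have hσne : ∀ x ∈ Ioi (0:ℝ), σ x ≠ 0 := fun x hx => (hσ x hx).ne'
  have hhc : ContinuousOn h (Ioi 0) := hh.continuousOn
  have hdh1 : ContDiffOn ℝ 1 (deriv h) (Ioi 0) := hh.deriv_of_isOpen isOpen_Ioi (by norm_num)
  have hDh : ∀ x ∈ Ioi (0:ℝ), HasDerivAt h (deriv h x) x := fun x hx =>
    ((hh.differentiableOn (by norm_num) x hx).differentiableAt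
      (isOpen_Ioi.mem_nhds hx)).hasDerivAt
  have hDdh : ∀ x ∈ Ioi (0:ℝ), HasDerivAt (deriv h) (deriv (deriv h) x) x := fun x hx =>
    ((hdh1.differentiableOn (by norm_num) x hx).differentiableAt
      (isOpen_Ioi.mem_nhds hx)).hasDerivAt
  have hP : ∀ x ∈ Ioi (0:ℝ), HasDerivAt (Pa σ k ξ) (2 * k x / (σ x)^2) x := fun x hx =>
    Pa_hasDeriv hσc hkc hσ hξ hx
  have hI : ∀ x ∈ Ioi (0:ℝ), HasDerivAt (Ia σ k ξ h) (Real.exp (-(Pa σ k ξ x)) / (h x)^2) x :=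
    fun x hx => Ia_hasDeriv hσc hkc hσ hξ hhc hpos hx
  -- the key pointwise identity from the ODE
  have key : ∀ x ∈ Ioi (0:ℝ),
      deriv (deriv h) x + deriv h x * (2 * k x / (σ x)^2)
        = 2 * (r x - lam) / (σ x)^2 * h x := by
    intro x hx
    have e := hode x hx
    field_simp [hσne x hx] at e ⊢
    linarith
  -- ψ = h' e^P is strictly monotone
  have hψd : ∀ x ∈ Ioi (0:ℝ), HasDerivAt (fun y => deriv h y * Real.exp (Pa σ k ξ y))
      (deriv (deriv h) x * Real.exp (Pa σ k ξ x)
        + deriv h x * (Real.exp (Pa σ k ξ x) * (2 * k x / (σ x)^2))) x :=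
    fun x hx => (hDdh x hx).mul ((hP x hx).exp)
  have hψmono : StrictMonoOn (fun y => deriv h y * Real.exp (Pa σ k ξ y)) (Ioi 0) := by
    apply strictMonoOn_of_deriv_pos (convex_Ioi 0)
      (fun x hx => (hψd x hx).continuousAt.continuousWithinAt)
    intro x hx
    rw [interior_Ioi] at hx
    rw [(hψd x hx).deriv]
    have k1 := key x hx
    have e2 : deriv (deriv h) x * Real.exp (Pa σ k ξ x)
        + deriv h x * (Real.exp (Pa σ k ξ x) * (2 * k x / (σ x)^2))
        = (2 * (r x - lam) / (σ x)^2 * h x) * Real.exp (Pa σ k ξ x) := by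
      rw [← k1]; ring
    rw [e2]
    have := hq x hx
    have := hpos x hx
    have := hσne x hx
    positivity
  have hImono : StrictMonoOn (Ia σ k ξ h) (Ioi 0) := by
    apply strictMonoOn_of_deriv_pos (convex_Ioi 0)
      (fun x hx => (hI x hx).continuousAt.continuousWithinAt)
    intro x hx
    rw [interior_Ioi] at hx
    rw [(hI x hx).deriv]
    have := hpos x hx
    positivity
  constructor
  · -- case A : deriv h x₀ ≤ 0
    intro hd
    have hφneg : ∀ x ∈ Ioo (0:ℝ) x₀, deriv h x < 0 := by
      intro x hx
      have hmono := hψmono (a := x) (b := x₀) hx.1 hx₀ hx.2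
      simp only at hmono
      have he1 := Real.exp_pos (Pa σ k ξ x)
      have he2 := Real.exp_pos (Pa σ k ξ x₀)
      nlinarith
    set a : ℝ := min x₀ ξ / 2 with hadef
    have hx₀' : (0:ℝ) < x₀ := hx₀
    have ha0 : 0 < a := by positivity
    have hax₀ : a < x₀ := by
      have : min x₀ ξ ≤ x₀ := min_le_left _ _
      simp only [hadef]; linarith
    have haξ : a < ξ := by
      have : min x₀ ξ ≤ ξ := min_le_right _ _
      simp only [hadef]; linarith
    have ha : a ∈ Ioi (0:ℝ) := ha0
    have hφa : deriv h a < 0 := hφneg a ⟨ha0, hax₀⟩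
    -- θ = e^{-P}/(-h') is monotone on Ioc 0 a
    have hθd : ∀ t ∈ Ioo (0:ℝ) x₀,
        HasDerivAt (fun y => Real.exp (-(Pa σ k ξ y)) / (-(deriv h y)))
          ((Real.exp (-(Pa σ k ξ t)) * -(2 * k t / (σ t)^2) * -(deriv h t)
            - Real.exp (-(Pa σ k ξ t)) * -(deriv (deriv h) t)) / (-(deriv h t))^2) t := by
      intro t ht
      have ht' : t ∈ Ioi (0:ℝ) := ht.1
      exact ((hP t ht').neg.exp).div (hDdh t ht').neg
        (ne_of_gt (by have := hφneg t ht; linarith))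
    have hθmono : StrictMonoOn (fun y => Real.exp (-(Pa σ k ξ y)) / (-(deriv h y))) (Ioc 0 a) := by
      apply strictMonoOn_of_deriv_pos (convex_Ioc 0 a)
      · intro t ht
        have ht' : t ∈ Ioo (0:ℝ) x₀ := ⟨ht.1, lt_of_le_of_lt ht.2 hax₀⟩
        exact (hθd t ht').continuousAt.continuousWithinAt
      · intro t ht
        rw [interior_Ioc] at ht
        have ht' : t ∈ Ioo (0:ℝ) x₀ := ⟨ht.1, lt_trans ht.2 hax₀⟩
        have htI : t ∈ Ioi (0:ℝ) := ht.1
        rw [(hθd t ht').deriv]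
        have hφt := hφneg t ht'
        have k1 := key t htI
        have e2 : Real.exp (-(Pa σ k ξ t)) * -(2 * k t / (σ t)^2) * -(deriv h t)
            - Real.exp (-(Pa σ k ξ t)) * -(deriv (deriv h) t)
            = Real.exp (-(Pa σ k ξ t)) * (2 * (r t - lam) / (σ t)^2 * h t) := by
          rw [← k1]; ring
        rw [e2]
        have := hq t htI
        have := hpos t htI
        have := hσne t htI
        have hφt2 : (0:ℝ) < (-(deriv h t))^2 := by nlinarith
        exact div_pos (by positivity) hφt2
    set c : ℝ := Real.exp (-(Pa σ k ξ a)) / (-(deriv h a)) with hcdef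
    have hc : 0 < c := div_pos (Real.exp_pos _) (by linarith)
    have hθle : ∀ t ∈ Ioc (0:ℝ) a, Real.exp (-(Pa σ k ξ t)) / (-(deriv h t)) ≤ c := by
      intro t ht
      rcases eq_or_lt_of_le ht.2 with he | hlt
      · rw [he, hcdef]
      · exact le_of_lt (hθmono ht (right_mem_Ioc.2 ha0) hlt)
    -- G = Ia - c/h is antitone on Ioc 0 a
    have hGd : ∀ t ∈ Ioi (0:ℝ),
        HasDerivAt (fun y => Ia σ k ξ h y - c / h y)
          (Real.exp (-(Pa σ k ξ t)) / (h t)^2 - (0 * h t - c * deriv h t) / (h t)^2) t := by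
      intro t ht
      exact (hI t ht).sub ((hasDerivAt_const t c).div (hDh t ht) (hne t ht))
    have hGanti : AntitoneOn (fun y => Ia σ k ξ h y - c / h y) (Ioc 0 a) := by
      apply antitoneOn_of_deriv_nonpos (convex_Ioc 0 a)
      · intro t ht
        exact (hGd t ht.1).continuousAt.continuousWithinAt
      · intro t ht
        rw [interior_Ioc] at ht
        exact ((hGd t ht.1).differentiableAt).differentiableWithinAt
      · intro t ht
        rw [interior_Ioc] at ht
        have ht' : t ∈ Ioo (0:ℝ) x₀ := ⟨ht.1, lt_trans ht.2 hax₀⟩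
        have htI : t ∈ Ioi (0:ℝ) := ht.1
        rw [(hGd t htI).deriv]
        have hφt := hφneg t ht'
        have hle := hθle t ⟨ht.1, le_of_lt ht.2⟩
        have hexp : Real.exp (-(Pa σ k ξ t)) ≤ c * (-(deriv h t)) := by
          rw [div_le_iff₀ (by linarith : (0:ℝ) < -(deriv h t))] at hle
          linarith
        have hh2 : (0:ℝ) < (h t)^2 := by have := hpos t htI; positivity
        rw [div_sub_div_same, div_nonpos_iff]
        right
        constructor
        · nlinarith
        · linarith
    set Il : ℝ := Ia σ k ξ h a - c / h a with hIldef
    have hbound : ∀ x ∈ Ioi (0:ℝ), x ≤ ξ → Il ≤ Ia σ k ξ h x := by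
      intro x hx hxξ
      rcases le_total x a with hxa | hax
      · have h1 := hGanti ⟨hx, hxa⟩ (right_mem_Ioc.2 ha0) hxa
        simp only at h1
        have hch : 0 < c / h x := div_pos hc (hpos x hx)
        simp only [hIldef]
        linarith
      · have h2 : Ia σ k ξ h a ≤ Ia σ k ξ h x := by
          rcases eq_or_lt_of_le hax with he | hlt
          · rw [he]
          · exact le_of_lt (hImono ha hx hlt)
        have hch : 0 < c / h a := div_pos hc (hpos a ha)
        simp only [hIldef]
        linarith
    have hIl_neg : Il < 0 := by
      have h1 : Ia σ k ξ h a < Ia σ k ξ h ξ := hImono ha hξ' haξ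
      rw [Ia_xi] at h1
      have hch : 0 < c / h a := div_pos hc (hpos a ha)
      simp only [hIldef]
      linarith
    have hDpos : 0 < -1 / (2 * Il) :=
      div_pos_iff.2 (Or.inr ⟨by norm_num, by linarith⟩)
    refine ⟨-1 / (2 * Il), hDpos, ?_⟩
    intro x hx
    have hDIl : -1 / (2 * Il) * Il = -(1/2) := by
      field_simp [hIl_neg.ne]
    rcases le_total x ξ with hxξ | hξx
    · have hb := hbound x hx hxξ
      have : -1 / (2 * Il) * Il ≤ -1 / (2 * Il) * Ia σ k ξ h x :=
        mul_le_mul_of_nonneg_left hb (le_of_lt hDpos)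
      rw [hDIl] at this
      linarith
    · have hIx : 0 ≤ Ia σ k ξ h x := by
        rcases eq_or_lt_of_le hξx with he | hlt
        · rw [← he, Ia_xi]
        · have := hImono hξ' hx hlt
          rw [Ia_xi] at this
          linarith
      nlinarith
  · -- case B : deriv h x₀ ≥ 0
    intro hd
    have hφpos : ∀ x, x₀ < x → 0 < deriv h x := by
      intro x hxx
      have hxI : x ∈ Ioi (0:ℝ) := lt_trans hx₀ hxx
      have hmono := hψmono hx₀ hxI hxx
      simp only at hmono
      have he1 := Real.exp_pos (Pa σ k ξ x)
      have he2 := Real.exp_pos (Pa σ k ξ x₀)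
      nlinarith
    set b : ℝ := max x₀ ξ + 1 with hbdef
    have hx₀' : (0:ℝ) < x₀ := hx₀
    have hbx₀ : x₀ < b := by
      have : x₀ ≤ max x₀ ξ := le_max_left _ _
      simp only [hbdef]; linarith
    have hbξ : ξ < b := by
      have : ξ ≤ max x₀ ξ := le_max_right _ _
      simp only [hbdef]; linarith
    have hb0 : 0 < b := lt_trans hx₀' hbx₀
    have hb : b ∈ Ioi (0:ℝ) := hb0
    have hφb : 0 < deriv h b := hφpos b hbx₀
    -- θ = e^{-P}/h' is antitone on Ici b
    have hθd : ∀ t, x₀ < t →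
        HasDerivAt (fun y => Real.exp (-(Pa σ k ξ y)) / (deriv h y))
          ((Real.exp (-(Pa σ k ξ t)) * -(2 * k t / (σ t)^2) * (deriv h t)
            - Real.exp (-(Pa σ k ξ t)) * (deriv (deriv h) t)) / (deriv h t)^2) t := by
      intro t ht
      have ht' : t ∈ Ioi (0:ℝ) := lt_trans hx₀' ht
      exact ((hP t ht').neg.exp).div (hDdh t ht') (ne_of_gt (hφpos t ht))
    have hθanti : AntitoneOn (fun y => Real.exp (-(Pa σ k ξ y)) / (deriv h y)) (Ici b) := by
      apply antitoneOn_of_deriv_nonpos (convex_Ici b)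
      · intro t ht
        exact (hθd t (lt_of_lt_of_le hbx₀ ht)).continuousAt.continuousWithinAt
      · intro t ht
        rw [interior_Ici] at ht
        exact ((hθd t (lt_trans hbx₀ ht)).differentiableAt).differentiableWithinAt
      · intro t ht
        rw [interior_Ici] at ht
        have htx₀ : x₀ < t := lt_trans hbx₀ ht
        have htI : t ∈ Ioi (0:ℝ) := lt_trans hx₀' htx₀
        rw [(hθd t htx₀).deriv]
        have hφt := hφpos t htx₀
        have k1 := key t htI
        have e2 : Real.exp (-(Pa σ k ξ t)) * -(2 * k t / (σ t)^2) * (deriv h t)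
            - Real.exp (-(Pa σ k ξ t)) * (deriv (deriv h) t)
            = -(Real.exp (-(Pa σ k ξ t)) * (2 * (r t - lam) / (σ t)^2 * h t)) := by
          rw [← k1]; ring
        rw [e2]
        have hq' := hq t htI
        have hp' := hpos t htI
        have hs' := hσne t htI
        apply div_nonpos_of_nonpos_of_nonneg
        · have : (0:ℝ) < Real.exp (-(Pa σ k ξ t)) * (2 * (r t - lam) / (σ t)^2 * h t) := by
            positivity
          linarith
        · positivity
    set c : ℝ := Real.exp (-(Pa σ k ξ b)) / (deriv h b) with hcdef
    have hc : 0 < c := div_pos (Real.exp_pos _) hφb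
    have hθle : ∀ t, b ≤ t → Real.exp (-(Pa σ k ξ t)) / (deriv h t) ≤ c := by
      intro t ht
      rcases eq_or_lt_of_le ht with he | hlt
      · rw [← he, hcdef]
      · exact hθanti self_mem_Ici (le_of_lt hlt) (le_of_lt hlt)
    -- G = Ia + c/h is antitone on Ici b
    have hGd : ∀ t ∈ Ioi (0:ℝ),
        HasDerivAt (fun y => Ia σ k ξ h y + c / h y)
          (Real.exp (-(Pa σ k ξ t)) / (h t)^2 + (0 * h t - c * deriv h t) / (h t)^2) t := by
      intro t ht
      exact (hI t ht).add ((hasDerivAt_const t c).div (hDh t ht) (hne t ht))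
    have hGanti : AntitoneOn (fun y => Ia σ k ξ h y + c / h y) (Ici b) := by
      apply antitoneOn_of_deriv_nonpos (convex_Ici b)
      · intro t ht
        exact (hGd t (lt_of_lt_of_le hb0 ht)).continuousAt.continuousWithinAt
      · intro t ht
        rw [interior_Ici] at ht
        exact ((hGd t (lt_trans hb0 ht)).differentiableAt).differentiableWithinAt
      · intro t ht
        rw [interior_Ici] at ht
        have htx₀ : x₀ < t := lt_trans hbx₀ ht
        have htI : t ∈ Ioi (0:ℝ) := lt_trans hx₀' htx₀
        rw [(hGd t htI).deriv]
        have hφt := hφpos t htx₀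
        have hle := hθle t (le_of_lt ht)
        have hexp : Real.exp (-(Pa σ k ξ t)) ≤ c * deriv h t := by
          rw [div_le_iff₀ hφt] at hle
          linarith
        have hh2 : (0:ℝ) < (h t)^2 := by have := hpos t htI; positivity
        rw [← add_div, div_nonpos_iff]
        right
        constructor
        · nlinarith
        · linarith
    set Iu : ℝ := Ia σ k ξ h b + c / h b with hIudef
    have hbound : ∀ x ∈ Ioi (0:ℝ), ξ ≤ x → Ia σ k ξ h x ≤ Iu := by
      intro x hx hξx
      rcases le_total b x with hbx | hxb
      · have h1 := hGanti self_mem_Ici hbx hbx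
        simp only at h1
        have hch : 0 < c / h x := div_pos hc (hpos x hx)
        simp only [hIudef]
        linarith
      · have h2 : Ia σ k ξ h x ≤ Ia σ k ξ h b := by
          rcases eq_or_lt_of_le hxb with he | hlt
          · rw [he]
          · exact le_of_lt (hImono hx hb hlt)
        have hch : 0 < c / h b := div_pos hc (hpos b hb)
        simp only [hIudef]
        linarith
    have hIu_pos : 0 < Iu := by
      have h1 : Ia σ k ξ h ξ < Ia σ k ξ h b := hImono hξ' hb hbξ
      rw [Ia_xi] at h1
      have hch : 0 < c / h b := div_pos hc (hpos b hb)
      simp only [hIudef]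
      linarith
    have hDneg : -1 / (2 * Iu) < 0 :=
      div_neg_of_neg_of_pos (by norm_num) (by linarith)
    refine ⟨-1 / (2 * Iu), hDneg, ?_⟩
    intro x hx
    have hDIu : -1 / (2 * Iu) * Iu = -(1/2) := by
      field_simp [hIu_pos.ne']
    rcases le_total ξ x with hξx | hxξ
    · have hb' := hbound x hx hξx
      have : -1 / (2 * Iu) * Iu ≤ -1 / (2 * Iu) * Ia σ k ξ h x := by
        apply mul_le_mul_of_nonpos_left hb' (le_of_lt hDneg)
      rw [hDIu] at this
      linarith
    · have hIx : Ia σ k ξ h x ≤ 0 := by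
        rcases eq_or_lt_of_le hxξ with he | hlt
        · rw [he, Ia_xi]
        · have := hImono hx hξ' hlt
          rw [Ia_xi] at this
          linarith
      nlinarith

/-- The extremal positive solutions `h_M` (with maximal initial derivative `M_λ`)
and `h_m` (with minimal initial derivative `m_λ`) are strictly increasing and
strictly decreasing respectively. -/
theorem extremal_solutions_monotone
    (σ k r : ℝ → ℝ) (lam : ℝ) (ξ : ℝ) (hξ : 0 < ξ)
    (hσc : ContinuousOn σ (Ioi 0)) (hkc : ContinuousOn k (Ioi 0))
    (hrc : ContinuousOn r (Ioi 0))
    (hσ : ∀ x ∈ Ioi (0:ℝ), 0 < σ x)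
    (hr : ∀ x ∈ Ioi (0:ℝ), 0 ≤ r x)
    (hlam : lam < ⨅ x : Ioi (0:ℝ), r x)
    (M m : ℝ)
    (hM : IsGreatest {b : ℝ | ∃ h : ℝ → ℝ, ContDiffOn ℝ 2 h (Ioi 0) ∧
      (∀ x ∈ Ioi (0:ℝ),
        (1/2) * (σ x)^2 * deriv (deriv h) x + k x * deriv h x - r x * h x
          = -lam * h x) ∧ (∀ x ∈ Ioi (0:ℝ), 0 < h x) ∧ h ξ = 1 ∧
      deriv h ξ = b} M)
    (hm : IsLeast {b : ℝ | ∃ h : ℝ → ℝ, ContDiffOn ℝ 2 h (Ioi 0) ∧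
      (∀ x ∈ Ioi (0:ℝ),
        (1/2) * (σ x)^2 * deriv (deriv h) x + k x * deriv h x - r x * h x
          = -lam * h x) ∧ (∀ x ∈ Ioi (0:ℝ), 0 < h x) ∧ h ξ = 1 ∧
      deriv h ξ = b} m)
    (hM' hm' : ℝ → ℝ)
    (hhM : ContDiffOn ℝ 2 hM' (Ioi 0)) (hhm : ContDiffOn ℝ 2 hm' (Ioi 0))
    (hodeM : ∀ x ∈ Ioi (0:ℝ),
      (1/2) * (σ x)^2 * deriv (deriv hM') x + k x * deriv hM' x - r x * hM' x
        = -lam * hM' x)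
    (hodem : ∀ x ∈ Ioi (0:ℝ),
      (1/2) * (σ x)^2 * deriv (deriv hm') x + k x * deriv hm' x - r x * hm' x
        = -lam * hm' x)
    (hposM : ∀ x ∈ Ioi (0:ℝ), 0 < hM' x) (hposm : ∀ x ∈ Ioi (0:ℝ), 0 < hm' x)
    (hM1 : hM' ξ = 1) (hm1 : hm' ξ = 1)
    (hMd : deriv hM' ξ = M) (hmd : deriv hm' ξ = m) :
    (∀ x ∈ Ioi (0:ℝ), 0 < deriv hM' x) ∧ (∀ x ∈ Ioi (0:ℝ), deriv hm' x < 0) := by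
  have hq : ∀ x ∈ Ioi (0:ℝ), 0 < r x - lam := by
    intro x hx
    have hbdd : BddBelow (Set.range fun y : Ioi (0:ℝ) => r y) := by
      refine ⟨0, ?_⟩
      rintro _ ⟨y, rfl⟩
      exact hr y y.2
    have hle : (⨅ y : Ioi (0:ℝ), r y) ≤ r x := ciInf_le hbdd ⟨x, hx⟩
    linarith
  constructor
  · intro x hx
    by_contra hcon
    push_neg at hcon
    obtain ⟨D, hD, hDpos⟩ :=
      (exists_D σ k r lam ξ hξ hσc hkc hσ hq hM' hhM hodeM hposM x hx).1 hcon
    obtain ⟨g, hg1, hg2, hg3, hg4, hg5⟩ :=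
      mem_construct σ k r lam ξ hξ hσc hkc hσ hM' hhM hodeM hposM hM1 D hDpos
    have hmem : deriv hM' ξ + D ∈ {b : ℝ | ∃ h : ℝ → ℝ, ContDiffOn ℝ 2 h (Ioi 0) ∧
        (∀ x ∈ Ioi (0:ℝ),
          (1/2) * (σ x)^2 * deriv (deriv h) x + k x * deriv h x - r x * h x
            = -lam * h x) ∧ (∀ x ∈ Ioi (0:ℝ), 0 < h x) ∧ h ξ = 1 ∧
        deriv h ξ = b} := ⟨g, hg1, hg2, hg3, hg4, hg5⟩
    have hub := hM.2 hmem
    rw [hMd] at hub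
    linarith
  · intro x hx
    by_contra hcon
    push_neg at hcon
    obtain ⟨D, hD, hDpos⟩ :=
      (exists_D σ k r lam ξ hξ hσc hkc hσ hq hm' hhm hodem hposm x hx).2 hcon
    obtain ⟨g, hg1, hg2, hg3, hg4, hg5⟩ :=
      mem_construct σ k r lam ξ hξ hσc hkc hσ hm' hhm hodem hposm hm1 D hDpos
    have hmem : deriv hm' ξ + D ∈ {b : ℝ | ∃ h : ℝ → ℝ, ContDiffOn ℝ 2 h (Ioi 0) ∧
        (∀ x ∈ Ioi (0:ℝ),
          (1/2) * (σ x)^2 * deriv (deriv h) x + k x * deriv h x - r x * h x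
            = -lam * h x) ∧ (∀ x ∈ Ioi (0:ℝ), 0 < h x) ∧ h ξ = 1 ∧
        deriv h ξ = b} := ⟨g, hg1, hg2, hg3, hg4, hg5⟩
    have hlb := hm.2 hmem
    rw [hmd] at hlb
    linarith
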